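/- Let L ⊆ ℝ^{m×n} be a linear subspace, D ∈ S^m_{++}, K° ∈ ℝ^{m×n}, C(K) := (K−K°)ᵀD(K−K°), p ∈ [1,∞], Σ̂ ∈ S₊ⁿ, r₁, r₂ ≥ 0, and 𝒞 := {Λ₁ ∈ S₊ⁿ : ‖Λ₁‖₁ ≤ r₁} × {Λ₂ ∈ S₊ⁿ : ‖Λ₂ − Σ̂‖_p ≤ r₂}. Let {η^i}_{i≥0} be positive step sizes and let sequences {K^i} ⊆ L and {Λ^i = (Λ₁^i, Λ₂^i)} satisfy Λ⁰ = (0, Σ̂), K^i ∈ argmin_{K∈L} tr((Λ₁^i+Λ₂^i)C(K)), and Λ^{i+1} = Π_𝒞(Λ^i + η^i(C(K^i), C(K^i))), where Π_𝒞 is the Frobenius-orthogonal projection onto 𝒞. Then Λ₂^i ⪰ Σ̂ for all i ≥ 0; moreover, if Σ̂ ≻ 0, then Λ₁^i + Λ₂^i ≻ 0 at every iterate. -/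

import Mathlib

open Matrix
open scoped ENNReal

noncomputable def singVals {n : ℕ} (A : Matrix (Fin n) (Fin n) ℝ) : Fin n → ℝ :=
  fun i => Real.sqrt ((show (Aᵀ * A).IsHermitian by
    simpa [Matrix.conjTranspose_eq_transpose_of_trivial] using
      Matrix.isHermitian_conjTranspose_mul_self A).eigenvalues i)

/-- The Schatten `p`-norm of a square real matrix, defined via its singular values. -/
noncomputable def schattenNorm {n : ℕ} (p : ℝ≥0∞) (A : Matrix (Fin n) (Fin n) ℝ) : ℝ :=
  if p = ⊤ then ⨆ i, singVals A i
  else (∑ i, singVals A i ^ p.toReal) ^ (1 / p.toReal)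


namespace Stmt18Aux

open Polynomial

variable {n : ℕ}

/-- trace of `Mᵀ * M` is a sum of squares. -/
lemma trace_transpose_mul_self_eq (M : Matrix (Fin n) (Fin n) ℝ) :
    (Mᵀ * M).trace = ∑ j, ∑ i, (M i j) ^ 2 := by
  simp [Matrix.trace, Matrix.diag, Matrix.mul_apply, sq]

lemma trace_transpose_mul_self_nonneg (M : Matrix (Fin n) (Fin n) ℝ) :
    0 ≤ (Mᵀ * M).trace := by
  rw [trace_transpose_mul_self_eq]
  positivity

lemma eq_zero_of_trace_transpose_mul_self (M : Matrix (Fin n) (Fin n) ℝ)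
    (h : (Mᵀ * M).trace ≤ 0) : M = 0 := by
  rw [trace_transpose_mul_self_eq] at h
  ext i j
  have h1 : ∀ j ∈ Finset.univ, (0:ℝ) ≤ ∑ i, (M i j) ^ 2 := by
    intro j _; positivity
  have h2 : ∑ j, ∑ i, (M i j) ^ 2 = 0 :=
    le_antisymm h (Finset.sum_nonneg h1)
  have h3 := (Finset.sum_eq_zero_iff_of_nonneg h1).mp h2 j (Finset.mem_univ j)
  have h4 : ∀ i ∈ Finset.univ, (0:ℝ) ≤ (M i j) ^ 2 := by intro i _; positivity
  have := (Finset.sum_eq_zero_iff_of_nonneg h4).mp h3 i (Finset.mem_univ i)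
  simpa using pow_eq_zero_iff (n := 2) (by norm_num) |>.mp this

lemma trace_mul_nonneg {X Y : Matrix (Fin n) (Fin n) ℝ}
    (hX : X.PosSemidef) (hY : Y.PosSemidef) : 0 ≤ (X * Y).trace := by
  obtain ⟨B, hB⟩ : ∃ B : Matrix (Fin n) (Fin n) ℝ, X = Bᴴ * B := by
    open scoped MatrixOrder in exact CStarAlgebra.nonneg_iff_eq_star_mul_self.mp hX.nonneg
  obtain ⟨C, hC⟩ : ∃ C : Matrix (Fin n) (Fin n) ℝ, Y = Cᴴ * C := by
    open scoped MatrixOrder in exact CStarAlgebra.nonneg_iff_eq_star_mul_self.mp hY.nonneg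
  have : (X * Y).trace = ((C * Bᴴ)ᴴ * (C * Bᴴ)).trace := by
    rw [hB, hC, conjTranspose_mul, conjTranspose_conjTranspose]
    rw [show Bᴴ * B * (Cᴴ * C) = Bᴴ * (B * Cᴴ * C) by noncomm_ring]
    rw [Matrix.trace_mul_comm]
    noncomm_ring
  rw [this]
  have := trace_transpose_mul_self_nonneg (C * Bᴴ)
  simpa [Matrix.conjTranspose_eq_transpose_of_trivial] using this

lemma posSemidef_smul {X : Matrix (Fin n) (Fin n) ℝ} (hX : X.PosSemidef)
    {c : ℝ} (hc : 0 ≤ c) : (c • X).PosSemidef := by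
  refine ⟨?_, fun x => ?_⟩
  · simpa [Matrix.IsHermitian] using congrArg (c • ·) hX.1
  · have := hX.2 x
    exact (hX.smul hc).2 x

lemma charpoly_diagonal (d : Fin n → ℝ) :
    (Matrix.diagonal d).charpoly = ∏ i, (X - C (d i)) := by
  have h : charmatrix (Matrix.diagonal d) = Matrix.diagonal (fun i => X - C (d i)) := by
    ext i j
    by_cases hij : i = j
    · subst hij; simp [charmatrix_apply_eq]
    · simp [charmatrix_apply_ne _ _ _ hij, Matrix.diagonal_apply_ne _ hij,
        Matrix.diagonal_apply_ne' _ hij]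
  rw [Matrix.charpoly, h, Matrix.det_diagonal]

lemma charpoly_conj (V W M : Matrix (Fin n) (Fin n) ℝ) (hVW : V * W = 1)
    (hWV : W * V = 1) : (V * M * W).charpoly = M.charpoly := by
  classical
  have hmap : ∀ (A B : Matrix (Fin n) (Fin n) ℝ),
      (A * B).map (C : ℝ →+* ℝ[X]) = A.map C * B.map C := fun A B =>
    Matrix.map_mul
  have key : charmatrix (V * M * W) = V.map (C : ℝ →+* ℝ[X]) * charmatrix M * W.map C := by
    unfold charmatrix
    rw [Matrix.mul_sub, Matrix.sub_mul]
    congr 1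
    · have hc := (Matrix.scalar_commute (X : ℝ[X]) (fun r => Commute.all _ _)
        (V.map (C : ℝ →+* ℝ[X]))).eq
      rw [← hc, Matrix.mul_assoc, ← hmap, hVW]
      simp
    · simp only [RingHom.mapMatrix_apply]
      rw [← hmap, ← hmap]
  rw [Matrix.charpoly, key, Matrix.det_mul, Matrix.det_mul, Matrix.charpoly]
  have : V.map (C : ℝ →+* ℝ[X]) * W.map C = 1 := by rw [← hmap, hVW]; simp
  have hdet : (V.map (C : ℝ →+* ℝ[X])).det * (W.map C).det = 1 := by
    rw [← Matrix.det_mul, this, Matrix.det_one]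
  rw [mul_comm (V.map (C : ℝ →+* ℝ[X])).det, mul_assoc, hdet, mul_one]

/-- Over ℝ, the spectral theorem without `RCLike.ofReal`. -/
lemma spectral_real {B : Matrix (Fin n) (Fin n) ℝ} (hB : B.IsHermitian) :
    B = (hB.eigenvectorUnitary : Matrix (Fin n) (Fin n) ℝ) *
        Matrix.diagonal hB.eigenvalues *
        star (hB.eigenvectorUnitary : Matrix (Fin n) (Fin n) ℝ) := by
  have h := hB.spectral_theorem
  simp only [Unitary.conjStarAlgAut_apply] at h
  convert h using 3 <;> rfl

lemma charpoly_eq_prod {B : Matrix (Fin n) (Fin n) ℝ} (hB : B.IsHermitian) :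
    B.charpoly = ∏ i, (X - C (hB.eigenvalues i)) := by
  have hU : (hB.eigenvectorUnitary : Matrix (Fin n) (Fin n) ℝ) *
      star (hB.eigenvectorUnitary : Matrix (Fin n) (Fin n) ℝ) = 1 :=
    Matrix.mem_unitaryGroup_iff.mp hB.eigenvectorUnitary.2
  have hU' : star (hB.eigenvectorUnitary : Matrix (Fin n) (Fin n) ℝ) *
      (hB.eigenvectorUnitary : Matrix (Fin n) (Fin n) ℝ) = 1 :=
    Matrix.mem_unitaryGroup_iff'.mp hB.eigenvectorUnitary.2
  conv_lhs => rw [spectral_real hB]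
  rw [charpoly_conj _ _ _ hU hU', charpoly_diagonal]

/-- If a hermitian matrix equals `V * diagonal d * W` with `V * W = W * V = 1`, then its
multiset of eigenvalues is the multiset of the `d i`. -/
lemma eigenvalues_multiset {B : Matrix (Fin n) (Fin n) ℝ} (hB : B.IsHermitian)
    (V W : Matrix (Fin n) (Fin n) ℝ) (hVW : V * W = 1) (hWV : W * V = 1)
    (d : Fin n → ℝ) (hBd : B = V * Matrix.diagonal d * W) :
    Multiset.map hB.eigenvalues Finset.univ.val = Multiset.map d Finset.univ.val := by
  have h1 : B.charpoly = ∏ i, (X - C (hB.eigenvalues i)) := charpoly_eq_prod hB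
  have h2 : B.charpoly = ∏ i, (X - C (d i)) := by
    rw [hBd, charpoly_conj _ _ _ hVW hWV, charpoly_diagonal]
  have h3 : (∏ i, (X - C (hB.eigenvalues i))) = ∏ i, (X - C (d i)) := by
    rw [← h1, ← h2]
  have key : ∀ f : Fin n → ℝ,
      (∏ i, (X - C (f i))).roots = Multiset.map f Finset.univ.val := by
    intro f
    have : (∏ i, (X - C (f i))) =
        ((Multiset.map f Finset.univ.val).map fun a => X - C a).prod := by
      rw [Multiset.map_map]
      rfl
    rw [this, Polynomial.roots_multiset_prod_X_sub_C]
  have := congrArg Polynomial.roots h3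
  rwa [key, key] at this

/-- singular values of a hermitian real matrix: multiset of absolute eigenvalues. -/
lemma singVals_multiset {B : Matrix (Fin n) (Fin n) ℝ} (hB : B.IsHermitian) :
    Multiset.map (singVals B) Finset.univ.val =
      Multiset.map (fun i => |hB.eigenvalues i|) Finset.univ.val := by
  have hU : (hB.eigenvectorUnitary : Matrix (Fin n) (Fin n) ℝ) *
      star (hB.eigenvectorUnitary : Matrix (Fin n) (Fin n) ℝ) = 1 :=
    Matrix.mem_unitaryGroup_iff.mp hB.eigenvectorUnitary.2
  have hU' : star (hB.eigenvectorUnitary : Matrix (Fin n) (Fin n) ℝ) *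
      (hB.eigenvectorUnitary : Matrix (Fin n) (Fin n) ℝ) = 1 :=
    Matrix.mem_unitaryGroup_iff'.mp hB.eigenvectorUnitary.2
  have hBt : Bᵀ = B := by
    have := hB.eq
    rwa [Matrix.conjTranspose_eq_transpose_of_trivial] at this
  have hBB : Bᵀ * B = (hB.eigenvectorUnitary : Matrix (Fin n) (Fin n) ℝ) *
      Matrix.diagonal (fun i => hB.eigenvalues i ^ 2) *
      star (hB.eigenvectorUnitary : Matrix (Fin n) (Fin n) ℝ) := by
    rw [hBt]
    conv_lhs => rw [spectral_real hB]
    rw [show ∀ U D S : Matrix (Fin n) (Fin n) ℝ, (U * D * S) * (U * D * S) =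
      U * (D * (S * U) * D) * S from fun _ _ _ => by noncomm_ring, hU',
      Matrix.mul_one, Matrix.diagonal_mul_diagonal]
    congr 2
    ext i
    ring
  have hmul := eigenvalues_multiset (show (Bᵀ * B).IsHermitian by
      simpa [Matrix.conjTranspose_eq_transpose_of_trivial] using
        Matrix.isHermitian_conjTranspose_mul_self B)
    _ _ hU hU' _ hBB
  have h1 : Multiset.map (singVals B) Finset.univ.val =
      Multiset.map Real.sqrt
        (Multiset.map ((show (Bᵀ * B).IsHermitian by
      simpa [Matrix.conjTranspose_eq_transpose_of_trivial] using
        Matrix.isHermitian_conjTranspose_mul_self B).eigenvalues)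
          Finset.univ.val) := by
    rw [Multiset.map_map]; rfl
  rw [h1, hmul, Multiset.map_map]
  congr 1
  ext i
  simp [Function.comp, Real.sqrt_sq_eq_abs]

/-- Positive/negative part decomposition of a real symmetric matrix. -/
lemma pos_part_exists {H : Matrix (Fin n) (Fin n) ℝ} (hH : H.IsHermitian) :
    ∃ P N : Matrix (Fin n) (Fin n) ℝ, P.PosSemidef ∧ N.PosSemidef ∧ H = P - N ∧
      (P * N).trace = 0 ∧
      ∀ p : ℝ≥0∞, 1 ≤ p → schattenNorm p P ≤ schattenNorm p H := by
  classical
  set U : Matrix (Fin n) (Fin n) ℝ := (hH.eigenvectorUnitary : Matrix (Fin n) (Fin n) ℝ)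
    with hUdef
  have hU : U * star U = 1 := Matrix.mem_unitaryGroup_iff.mp hH.eigenvectorUnitary.2
  have hU' : star U * U = 1 := Matrix.mem_unitaryGroup_iff'.mp hH.eigenvectorUnitary.2
  set l : Fin n → ℝ := hH.eigenvalues with hldef
  refine ⟨U * Matrix.diagonal (fun i => max (l i) 0) * star U,
    U * Matrix.diagonal (fun i => max (l i) 0 - l i) * star U, ?_, ?_, ?_, ?_, ?_⟩
  · have := (Matrix.PosSemidef.diagonal (d := fun i => max (l i) 0)
      (fun i => le_max_right _ _)).mul_mul_conjTranspose_same U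
    simpa [Matrix.star_eq_conjTranspose] using this
  · have := (Matrix.PosSemidef.diagonal (d := fun i => max (l i) 0 - l i)
      (fun i => by simp [sub_nonneg, le_max_left])).mul_mul_conjTranspose_same U
    simpa [Matrix.star_eq_conjTranspose] using this
  · conv_lhs => rw [spectral_real hH]
    rw [← Matrix.sub_mul, ← Matrix.mul_sub]
    congr 2
    ext i j
    by_cases h : i = j <;> simp [Matrix.diagonal_apply, h, hldef]
  · rw [show ∀ D1 D2 : Matrix (Fin n) (Fin n) ℝ, (U * D1 * star U) * (U * D2 * star U) =
      U * (D1 * (star U * U) * D2) * star U from fun _ _ => by noncomm_ring, hU',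
      Matrix.mul_one, Matrix.trace_mul_cycle, ← Matrix.mul_assoc, hU', Matrix.one_mul,
      Matrix.diagonal_mul_diagonal, Matrix.trace_diagonal]
    apply Finset.sum_eq_zero
    intro i _
    rcases le_total (l i) 0 with h | h
    · simp [max_eq_right h]
    · simp [max_eq_left h]
  · -- Schatten norm comparison
    intro p hp
    have hPpsd : (U * Matrix.diagonal (fun i => max (l i) 0) * star U).IsHermitian :=
      ((Matrix.PosSemidef.diagonal (fun i => le_max_right (l i) 0)).mul_mul_conjTranspose_same
        U).isHermitian
    have hPmul := eigenvalues_multiset hPpsd U (star U) hU hU' _ rfl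
    have hPsing := singVals_multiset hPpsd
    have hHsing := singVals_multiset hH
    have hPsing' : Multiset.map (singVals (U * Matrix.diagonal (fun i => max (l i) 0) * star U))
        Finset.univ.val = Multiset.map (fun i => max (l i) 0) Finset.univ.val := by
      rw [hPsing]
      have := congrArg (Multiset.map (fun x => |x|)) hPmul
      rw [Multiset.map_map, Multiset.map_map] at this
      rw [show (fun i => |hPpsd.eigenvalues i|) = (fun x => |x|) ∘ hPpsd.eigenvalues from rfl,
        ← Multiset.map_map, hPmul, Multiset.map_map]
      congr 1
      ext i
      simp [abs_of_nonneg (le_max_right (l i) 0)]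
    have hsvP : ∀ i, 0 ≤ singVals (U * Matrix.diagonal (fun i => max (l i) 0) * star U) i :=
      fun i => Real.sqrt_nonneg _
    have hsvH : ∀ i, 0 ≤ singVals H i := fun i => Real.sqrt_nonneg _
    unfold schattenNorm
    by_cases hptop : p = ⊤
    · simp only [hptop, if_pos rfl]
      rcases isEmpty_or_nonempty (Fin n) with he | hne
      · simp [iSup, Set.range_eq_empty, Real.sSup_empty]
      · apply ciSup_le
        intro i
        have hmem : singVals (U * Matrix.diagonal (fun i => max (l i) 0) * star U) i ∈
            Multiset.map (fun i => max (l i) 0) Finset.univ.val := by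
          rw [← hPsing']
          exact Multiset.mem_map_of_mem _ (Finset.mem_univ i)
        obtain ⟨j, _, hj⟩ := Multiset.mem_map.mp hmem
        have hmem2 : |l j| ∈ Multiset.map (singVals H) Finset.univ.val := by
          rw [hHsing]
          exact Multiset.mem_map_of_mem _ (Finset.mem_univ j)
        obtain ⟨k, _, hk⟩ := Multiset.mem_map.mp hmem2
        calc singVals (U * Matrix.diagonal (fun i => max (l i) 0) * star U) i
            = max (l j) 0 := hj.symm
          _ ≤ |l j| := max_le (le_abs_self _) (abs_nonneg _)
          _ = singVals H k := hk.symm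
          _ ≤ ⨆ i, singVals H i :=
              le_ciSup (Set.Finite.bddAbove (Set.finite_range _)) k
    · simp only [if_neg hptop]
      have hq1 : 1 ≤ p.toReal := by
        have h := ENNReal.toReal_mono hptop hp
        simpa using h
      have hq0 : (0:ℝ) ≤ p.toReal := by linarith
      have hsum : ∀ (f : Fin n → ℝ), ∑ i, f i = (Multiset.map f Finset.univ.val).sum :=
        fun f => rfl
      have inner : ∑ i, singVals (U * Matrix.diagonal (fun i => max (l i) 0) * star U) i
            ^ p.toReal ≤ ∑ i, singVals H i ^ p.toReal := by
        have e1 : ∑ i, singVals (U * Matrix.diagonal (fun i => max (l i) 0) * star U) i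
            ^ p.toReal = ∑ i, (max (l i) 0) ^ p.toReal := by
          rw [hsum, hsum, show (fun i => singVals
              (U * Matrix.diagonal (fun i => max (l i) 0) * star U) i ^ p.toReal) =
            (fun x : ℝ => x ^ p.toReal) ∘
              singVals (U * Matrix.diagonal (fun i => max (l i) 0) * star U) from rfl,
            show (fun i => (max (l i) 0) ^ p.toReal) =
              (fun x : ℝ => x ^ p.toReal) ∘ (fun i => max (l i) 0) from rfl,
            ← Multiset.map_map, ← Multiset.map_map, hPsing']
        have e2 : ∑ i, singVals H i ^ p.toReal = ∑ i, |l i| ^ p.toReal := by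
          rw [hsum, hsum, show (fun i => singVals H i ^ p.toReal) =
              (fun x : ℝ => x ^ p.toReal) ∘ singVals H from rfl,
            show (fun i => |l i| ^ p.toReal) =
              (fun x : ℝ => x ^ p.toReal) ∘ (fun i => |l i|) from rfl,
            ← Multiset.map_map, ← Multiset.map_map, hHsing]
        rw [e1, e2]
        apply Finset.sum_le_sum
        intro i _
        exact Real.rpow_le_rpow (le_max_right _ _)
          (max_le (le_abs_self _) (abs_nonneg _)) hq0
      exact Real.rpow_le_rpow
        (Finset.sum_nonneg fun i _ => Real.rpow_nonneg (hsvP i) _) inner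
        (by positivity)


end Stmt18Aux

open Stmt18Aux

/-- Iterates of the dual projected subgradient method: starting from
`Λ⁰ = (0, Σ̂)`, with `Kⁱ` a minimizer of `K ↦ tr((Λ₁ⁱ+Λ₂ⁱ)C(K))` over `L` and
`Λ^{i+1}` the Frobenius projection of `Λⁱ + ηⁱ(C(Kⁱ), C(Kⁱ))` onto
`𝒞 = {Λ₁ ⪰ 0 : ‖Λ₁‖₁ ≤ r₁} × {Λ₂ ⪰ 0 : ‖Λ₂-Σ̂‖_p ≤ r₂}`, we have `Λ₂ⁱ ⪰ Σ̂` for all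
`i`; moreover, if `Σ̂ ≻ 0` then `Λ₁ⁱ + Λ₂ⁱ ≻ 0` at every iterate. -/
theorem stmt18 {m n : ℕ} (p : ℝ≥0∞) (hp : 1 ≤ p)
    (L : Submodule ℝ (Matrix (Fin m) (Fin n) ℝ))
    (D : Matrix (Fin m) (Fin m) ℝ) (hD : D.PosDef) (Kor : Matrix (Fin m) (Fin n) ℝ)
    (Cmap : Matrix (Fin m) (Fin n) ℝ → Matrix (Fin n) (Fin n) ℝ)
    (hCmap : ∀ K, Cmap K = (K - Kor)ᵀ * D * (K - Kor))
    (Sighat : Matrix (Fin n) (Fin n) ℝ) (hSig : Sighat.PosSemidef)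
    (r₁ r₂ : ℝ) (hr₁ : 0 ≤ r₁) (hr₂ : 0 ≤ r₂)
    (η : ℕ → ℝ) (hη : ∀ i, 0 < η i)
    (K : ℕ → Matrix (Fin m) (Fin n) ℝ) (Λ₁ Λ₂ : ℕ → Matrix (Fin n) (Fin n) ℝ)
    -- initialization `Λ⁰ = (0, Σ̂)`
    (hinit₁ : Λ₁ 0 = 0) (hinit₂ : Λ₂ 0 = Sighat)
    -- `Kⁱ ∈ argmin_{K ∈ L} tr((Λ₁ⁱ+Λ₂ⁱ)C(K))`
    (hK : ∀ i, K i ∈ L ∧ ∀ K' ∈ L,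
      ((Λ₁ i + Λ₂ i) * Cmap (K i)).trace ≤ ((Λ₁ i + Λ₂ i) * Cmap K').trace)
    -- `Λ^{i+1} ∈ 𝒞` ...
    (hmem : ∀ i, (Λ₁ (i + 1)).PosSemidef ∧ schattenNorm 1 (Λ₁ (i + 1)) ≤ r₁ ∧
      (Λ₂ (i + 1)).PosSemidef ∧ schattenNorm p (Λ₂ (i + 1) - Sighat) ≤ r₂)
    -- ... is the Frobenius-orthogonal projection of `Λⁱ + ηⁱ (C(Kⁱ), C(Kⁱ))` onto `𝒞`
    (hproj : ∀ i, ∀ M₁ M₂ : Matrix (Fin n) (Fin n) ℝ,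
      M₁.PosSemidef → schattenNorm 1 M₁ ≤ r₁ →
      M₂.PosSemidef → schattenNorm p (M₂ - Sighat) ≤ r₂ →
      ((Λ₁ (i + 1) - (Λ₁ i + η i • Cmap (K i)))ᵀ *
          (Λ₁ (i + 1) - (Λ₁ i + η i • Cmap (K i)))).trace +
        ((Λ₂ (i + 1) - (Λ₂ i + η i • Cmap (K i)))ᵀ *
          (Λ₂ (i + 1) - (Λ₂ i + η i • Cmap (K i)))).trace ≤
      ((M₁ - (Λ₁ i + η i • Cmap (K i)))ᵀ * (M₁ - (Λ₁ i + η i • Cmap (K i)))).trace +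
        ((M₂ - (Λ₂ i + η i • Cmap (K i)))ᵀ * (M₂ - (Λ₂ i + η i • Cmap (K i)))).trace) :
    (∀ i, (Λ₂ i - Sighat).PosSemidef) ∧
    (Sighat.PosDef → ∀ i, (Λ₁ i + Λ₂ i).PosDef) := by
  have hCpsd : ∀ i, (Cmap (K i)).PosSemidef := by
    intro i
    rw [hCmap]
    have h := hD.posSemidef.conjTranspose_mul_mul_same (K i - Kor)
    simpa [Matrix.conjTranspose_eq_transpose_of_trivial] using h
  have key : ∀ i, (Λ₂ i - Sighat).PosSemidef := by
    intro i
    induction i with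
    | zero =>
      rw [hinit₂, sub_self]
      exact Matrix.PosSemidef.zero
    | succ i ih =>
      set E := Λ₂ i + η i • Cmap (K i) with hE
      set G := E - Sighat with hG
      have hGpsd : G.PosSemidef := by
        have h2 : (η i • Cmap (K i)).PosSemidef := posSemidef_smul (hCpsd i) (hη i).le
        have h3 : G = (Λ₂ i - Sighat) + η i • Cmap (K i) := by rw [hG, hE]; abel
        rw [h3]
        exact ih.add h2
      have hherm : (Λ₂ (i + 1) - Sighat).IsHermitian :=
        (hmem i).2.2.1.isHermitian.sub hSig.isHermitian
      obtain ⟨P, N, hP, hN, hHPN, hPN0, hSch⟩ := pos_part_exists hherm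
      have hM2psd : (Sighat + P).PosSemidef := hSig.add hP
      have hM2sch : schattenNorm p (Sighat + P - Sighat) ≤ r₂ := by
        have h1 : Sighat + P - Sighat = P := by abel
        rw [h1]
        exact le_trans (hSch p hp) (hmem i).2.2.2
      have hineq := hproj i (Λ₁ (i + 1)) (Sighat + P) (hmem i).1 (hmem i).2.1 hM2psd hM2sch
      have h2 : ((Λ₂ (i + 1) - E)ᵀ * (Λ₂ (i + 1) - E)).trace ≤
          ((Sighat + P - E)ᵀ * (Sighat + P - E)).trace := by
        rw [hE]
        linarith [hineq]
      have e1 : Λ₂ (i + 1) - E = (P - G) - N := by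
        have h := sub_eq_iff_eq_add.mp hHPN
        rw [h, hG]
        abel
      have e2 : Sighat + P - E = P - G := by rw [hG]; abel
      rw [e1, e2] at h2
      set Z := P - G with hZdef
      have hZh : Zᵀ = Z := by
        have h := (hP.isHermitian.sub hGpsd.isHermitian).eq
        rwa [Matrix.conjTranspose_eq_transpose_of_trivial] at h
      have expand : ((Z - N)ᵀ * (Z - N)).trace =
          (Zᵀ * Z).trace - 2 * (Zᵀ * N).trace + (Nᵀ * N).trace := by
        have hmm : (Z - N)ᵀ * (Z - N) = Zᵀ * Z - Zᵀ * N - Nᵀ * Z + Nᵀ * N := by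
          rw [Matrix.transpose_sub]
          noncomm_ring
        have htr : (Nᵀ * Z).trace = (Zᵀ * N).trace := by
          rw [← Matrix.trace_transpose (Zᵀ * N), Matrix.transpose_mul,
            Matrix.transpose_transpose]
        rw [hmm, Matrix.trace_add, Matrix.trace_sub, Matrix.trace_sub, htr]
        ring
      have hZN : (Zᵀ * N).trace ≤ 0 := by
        have hGt : Gᵀ = G := by
          have h := hGpsd.isHermitian.eq
          rwa [Matrix.conjTranspose_eq_transpose_of_trivial] at h
        have hPt : Pᵀ = P := by
          have h := hP.isHermitian.eq
          rwa [Matrix.conjTranspose_eq_transpose_of_trivial] at h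
        have : (Zᵀ * N).trace = (P * N).trace - (G * N).trace := by
          rw [hZh, hZdef, Matrix.sub_mul, Matrix.trace_sub]
        rw [this, hPN0]
        have := trace_mul_nonneg hGpsd hN
        linarith
      have hNN : (Nᵀ * N).trace ≤ 0 := by
        rw [expand] at h2
        linarith
      have hN0 : N = 0 := eq_zero_of_trace_transpose_mul_self N hNN
      rw [hHPN, hN0, sub_zero]
      exact hP
  refine ⟨key, ?_⟩
  intro hSd i
  have hpsd1 : (Λ₁ i).PosSemidef := by
    cases i with
    | zero => rw [hinit₁]; exact Matrix.PosSemidef.zero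
    | succ i => exact (hmem i).1
  have h : Λ₁ i + Λ₂ i = Sighat + (Λ₁ i + (Λ₂ i - Sighat)) := by abel
  rw [h]
  exact hSd.add_posSemidef (hpsd1.add (key i))
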